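/- Let φ₀ : ℝ × ℤ × ℤ → Mat(m×m, ℂ) be entrywise differentiable in t and satisfy (φ₀_{,1} − φ₀)_t = (φ₀_{,2} − φ₀)(φ₀_{,1} − φ₀ + I) − (φ₀_{,1} − φ₀ + I)(φ₀_{,2} − φ₀)_{,1,-2}. Let P, Q be constant n×n complex matrices, let ω̃ : ℝ → Mat(n×n, ℂ) be entrywise differentiable (a function of t only), and set γ₁ := ω̃ P − Q ω̃, γ₂ := −ω̃_t. Let θ (m×n) and η (n×m) be entrywise differentiable in t and satisfy (θ_{,1} + θ P)_{,2} = −θ_{,1} − (φ₀_{,1} − φ₀)_{,2} θ_{,1}, θ_t = θ_{,2} + (φ₀_{,2} − φ₀) θ, (η + Q η_{,1})_{,-2} = −η − η (φ₀_{,1} − φ₀), and η_t = −η_{,-2} − η (φ₀_{,2} − φ₀). Let Ω̃ be an invertible n×n matrix function, entrywise differentiable in t, satisfying Ω̃_{,2} − Ω̃ = η θ, (Ω̃ P)_{,2} = Q Ω̃_{,1} − η θ_{,1} + γ₁, and Ω̃_t = η_{,-2} θ − γ₂. Define φ := φ₀ + θ Ω̃^{-1} η_{,-2}, q̃ := −θ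 Ω̃^{-1}, r̃ := −Ω̃_{,2}^{-1} η. Then: (1) (φ_{,1} − φ)_t + (φ_{,1} − φ + I)(φ_{,2} − φ)_{,1,-2} − (φ_{,2} − φ)(φ_{,1} − φ + I) = (q̃_{,2} γ₁ r̃_{,1,-2})_{,-2} − q̃_{,2} γ₁ r̃_{,1,-2} + (q̃ γ₂ r̃_{,-2})_{,1} − q̃ γ₂ r̃_{,-2}; (2) q̃_{,1,2} = −(φ_{,1} − φ + I)_{,2} q̃_{,1} − q̃_{,2} Q − q̃_{,2} γ₁ Ω̃_{,1}^{-1}; (3) q̃_t = q̃_{,2} + (φ_{,2} − φ) q̃ + q̃ γ₂ Ω̃^{-1}; (4) r̃_{,-2} = −r̃ (φ_{,1} − φ + I) − P r̃_{,1,-2} + Ω̃_{,2}^{-1} γ₁ r̃_{,1,-2}; (5) r̃_t = −r̃_{,-2} − r̃ (φ_{,2} − φ) + Ω̃_{,2}^{-1} γ₂ r̃. -/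

import Mathlib

open Matrix

set_option maxHeartbeats 4000000

private lemma hd_entry_mul {k l p : ℕ} {A : ℝ → Matrix (Fin k) (Fin l) ℂ}
    {B : ℝ → Matrix (Fin l) (Fin p) ℂ}
    {A' : Matrix (Fin k) (Fin l) ℂ} {B' : Matrix (Fin l) (Fin p) ℂ} {t : ℝ}
    (hA : ∀ a b, HasDerivAt (fun s => A s a b) (A' a b) t)
    (hB : ∀ a b, HasDerivAt (fun s => B s a b) (B' a b) t)
    (a : Fin k) (b : Fin p) :
    HasDerivAt (fun s => (A s * B s) a b) ((A' * B t + A t * B') a b) t := by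
  have h : HasDerivAt (fun s => ∑ c : Fin l, A s a c * B s c b)
      (∑ c : Fin l, (A' a c * B t c b + A t a c * B' c b)) t :=
    HasDerivAt.fun_sum fun c _ => (hA a c).mul (hB c b)
  simpa [Matrix.mul_apply, Matrix.add_apply, Finset.sum_add_distrib] using h

private lemma diff_det {k : ℕ} {M : ℝ → Matrix (Fin k) (Fin k) ℂ} {t : ℝ}
    (h : ∀ a b, DifferentiableAt ℝ (fun s => M s a b) t) :
    DifferentiableAt ℝ (fun s => (M s).det) t := by
  simp only [Matrix.det_apply']
  exact DifferentiableAt.fun_sum fun σ _ => DifferentiableAt.const_mul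
    ((HasDerivAt.fun_finsetProd (fun i _ => ((h (σ i) i).hasDerivAt))).differentiableAt) _

private lemma diff_inv_entry {k : ℕ} {M : ℝ → Matrix (Fin k) (Fin k) ℂ} {t : ℝ}
    (h : ∀ a b, DifferentiableAt ℝ (fun s => M s a b) t)
    (hM : IsUnit (M t)) (a b : Fin k) :
    DifferentiableAt ℝ (fun s => (M s)⁻¹ a b) t := by
  have hdet0 : (M t).det ≠ 0 := by
    have := (Matrix.isUnit_iff_isUnit_det (M t)).mp hM
    exact IsUnit.ne_zero this
  have hadj : DifferentiableAt ℝ (fun s => (M s).adjugate a b) t := by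
    simp only [Matrix.adjugate_apply]
    apply diff_det
    intro a' b'
    rcases eq_or_ne a' b with rfl | hne
    · simp only [Matrix.updateRow_self]
      exact differentiableAt_const _
    · simp only [Matrix.updateRow_ne hne]
      exact h a' b'
  have : (fun s => (M s)⁻¹ a b) = fun s => ((M s).det)⁻¹ * (M s).adjugate a b := by
    funext s
    rw [Matrix.inv_def, Ring.inverse_eq_inv]
    simp [Matrix.smul_apply, smul_eq_mul]
  rw [this]
  exact ((diff_det h).inv hdet0).mul hadj

private lemma hd_inv {k : ℕ} {M : ℝ → Matrix (Fin k) (Fin k) ℂ} {M' : Matrix (Fin k) (Fin k) ℂ}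
    {t : ℝ} (h : ∀ a b, HasDerivAt (fun s => M s a b) (M' a b) t)
    (hM : ∀ s, IsUnit (M s)) (a b : Fin k) :
    HasDerivAt (fun s => (M s)⁻¹ a b) ((-((M t)⁻¹ * M' * (M t)⁻¹)) a b) t := by
  have hdiff : ∀ a b, DifferentiableAt ℝ (fun s => (M s)⁻¹ a b) t :=
    fun a b => diff_inv_entry (fun a b => (h a b).differentiableAt) (hM t) a b
  set N : Matrix (Fin k) (Fin k) ℂ := Matrix.of fun a b => deriv (fun s => (M s)⁻¹ a b) t with hN
  have hdN : ∀ a b, HasDerivAt (fun s => (M s)⁻¹ a b) (N a b) t :=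
    fun a b => (hdiff a b).hasDerivAt
  have hprod : ∀ a b : Fin k, HasDerivAt (fun s => (M s * (M s)⁻¹) a b)
      ((M' * (M t)⁻¹ + M t * N) a b) t := hd_entry_mul h hdN
  have hone : ∀ a b : Fin k, (M' * (M t)⁻¹ + M t * N) a b = (0 : ℂ) := by
    intro a b
    have hconst : (fun s => (M s * (M s)⁻¹) a b) = fun _ => (1 : Matrix (Fin k) (Fin k) ℂ) a b := by
      funext s
      rw [Matrix.mul_nonsing_inv _ ((Matrix.isUnit_iff_isUnit_det (M s)).mp (hM s))]
    have h0 : HasDerivAt (fun s => (M s * (M s)⁻¹) a b) 0 t := by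
      rw [hconst]; exact hasDerivAt_const _ _
    exact HasDerivAt.unique (hprod a b) h0
  have hzero : M' * (M t)⁻¹ + M t * N = 0 := by
    ext a b; exact hone a b
  have hNeq : N = -((M t)⁻¹ * M' * (M t)⁻¹) := by
    have h1 : M t * N = -(M' * (M t)⁻¹) := by
      rw [← sub_eq_zero]; rw [sub_neg_eq_add, add_comm]; exact hzero
    have h2 : (M t)⁻¹ * (M t * N) = (M t)⁻¹ * -(M' * (M t)⁻¹) := by rw [h1]
    rw [← Matrix.mul_assoc, Matrix.nonsing_inv_mul _ ((Matrix.isUnit_iff_isUnit_det (M t)).mp (hM t)),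
      Matrix.one_mul, Matrix.mul_neg] at h2
    rw [Matrix.mul_assoc]; exact h2
  rw [← hNeq]
  exact hdN a b


/-- binary Darboux transformation / self-consistent source extension for the
Miura-dual equation.  Given a solution `φ₀` of
`(φ₀_{,1} − φ₀)_t = (φ₀_{,2} − φ₀)(φ₀_{,1} − φ₀ + I) − (φ₀_{,1} − φ₀ + I)(φ₀_{,2} − φ₀)_{,1,-2}`,
constant `P, Q`, `ω̃ (= om)` a function of `t` only, `γ₁ = ω̃ P − Q ω̃`, `γ₂ = −ω̃_t`,
solutions `θ, η` of the linear system, and an invertible solution `Ω̃ (= Om)`, the quantities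
`φ = φ₀ + θ Ω̃⁻¹ η_{,-2}`, `q̃ (= qq) = −θ Ω̃⁻¹`, `r̃ (= rr) = −Ω̃_{,2}⁻¹ η` satisfy the
source-extended equations (1)–(5). -/
theorem stmt_16 (m n : ℕ)
    (φ₀ φ₀t : ℝ → ℤ → ℤ → Matrix (Fin m) (Fin m) ℂ)
    (hφ₀t : ∀ t j₁ j₂ (a b : Fin m),
      HasDerivAt (fun s => φ₀ s j₁ j₂ a b) (φ₀t t j₁ j₂ a b) t)
    (hseed : ∀ t j₁ j₂,
      φ₀t t (j₁ + 1) j₂ - φ₀t t j₁ j₂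
        = (φ₀ t j₁ (j₂ + 1) - φ₀ t j₁ j₂) * (φ₀ t (j₁ + 1) j₂ - φ₀ t j₁ j₂ + 1)
          - (φ₀ t (j₁ + 1) j₂ - φ₀ t j₁ j₂ + 1)
            * (φ₀ t (j₁ + 1) j₂ - φ₀ t (j₁ + 1) (j₂ - 1)))
    (P Q : Matrix (Fin n) (Fin n) ℂ)
    (om omt : ℝ → Matrix (Fin n) (Fin n) ℂ)
    (homt : ∀ t (a b : Fin n), HasDerivAt (fun s => om s a b) (omt t a b) t)
    (γ₁ γ₂ : ℝ → Matrix (Fin n) (Fin n) ℂ)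
    (hγ₁ : ∀ t, γ₁ t = om t * P - Q * om t)
    (hγ₂ : ∀ t, γ₂ t = -omt t)
    (θ θt : ℝ → ℤ → ℤ → Matrix (Fin m) (Fin n) ℂ)
    (hθt : ∀ t j₁ j₂ (a : Fin m) (b : Fin n),
      HasDerivAt (fun s => θ s j₁ j₂ a b) (θt t j₁ j₂ a b) t)
    -- (θ_{,1} + θ P)_{,2} = −θ_{,1} − (φ₀_{,1} − φ₀)_{,2} θ_{,1}
    (hθ1 : ∀ t j₁ j₂, θ t (j₁ + 1) (j₂ + 1) + θ t j₁ (j₂ + 1) * P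
      = -θ t (j₁ + 1) j₂ - (φ₀ t (j₁ + 1) (j₂ + 1) - φ₀ t j₁ (j₂ + 1)) * θ t (j₁ + 1) j₂)
    -- θ_t = θ_{,2} + (φ₀_{,2} − φ₀) θ
    (hθ2 : ∀ t j₁ j₂, θt t j₁ j₂
      = θ t j₁ (j₂ + 1) + (φ₀ t j₁ (j₂ + 1) - φ₀ t j₁ j₂) * θ t j₁ j₂)
    (η ηt : ℝ → ℤ → ℤ → Matrix (Fin n) (Fin m) ℂ)
    (hηt : ∀ t j₁ j₂ (a : Fin n) (b : Fin m),
      HasDerivAt (fun s => η s j₁ j₂ a b) (ηt t j₁ j₂ a b) t)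
    -- (η + Q η_{,1})_{,-2} = −η − η (φ₀_{,1} − φ₀)
    (hη1 : ∀ t j₁ j₂, η t j₁ (j₂ - 1) + Q * η t (j₁ + 1) (j₂ - 1)
      = -η t j₁ j₂ - η t j₁ j₂ * (φ₀ t (j₁ + 1) j₂ - φ₀ t j₁ j₂))
    -- η_t = −η_{,-2} − η (φ₀_{,2} − φ₀)
    (hη2 : ∀ t j₁ j₂, ηt t j₁ j₂
      = -η t j₁ (j₂ - 1) - η t j₁ j₂ * (φ₀ t j₁ (j₂ + 1) - φ₀ t j₁ j₂))
    (Om Omt : ℝ → ℤ → ℤ → Matrix (Fin n) (Fin n) ℂ)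
    (hOminv : ∀ t j₁ j₂, IsUnit (Om t j₁ j₂))
    (hOmt : ∀ t j₁ j₂ (a b : Fin n),
      HasDerivAt (fun s => Om s j₁ j₂ a b) (Omt t j₁ j₂ a b) t)
    (hOm1 : ∀ t j₁ j₂, Om t j₁ (j₂ + 1) - Om t j₁ j₂ = η t j₁ j₂ * θ t j₁ j₂)
    -- (Ω̃ P)_{,2} = Q Ω̃_{,1} − η θ_{,1} + γ₁
    (hOm2 : ∀ t j₁ j₂, Om t j₁ (j₂ + 1) * P
      = Q * Om t (j₁ + 1) j₂ - η t j₁ j₂ * θ t (j₁ + 1) j₂ + γ₁ t)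
    -- Ω̃_t = η_{,-2} θ − γ₂
    (hOm3 : ∀ t j₁ j₂, Omt t j₁ j₂ = η t j₁ (j₂ - 1) * θ t j₁ j₂ - γ₂ t)
    (φ : ℝ → ℤ → ℤ → Matrix (Fin m) (Fin m) ℂ)
    (qq : ℝ → ℤ → ℤ → Matrix (Fin m) (Fin n) ℂ)
    (rr : ℝ → ℤ → ℤ → Matrix (Fin n) (Fin m) ℂ)
    (hφ : ∀ t j₁ j₂, φ t j₁ j₂
      = φ₀ t j₁ j₂ + θ t j₁ j₂ * (Om t j₁ j₂)⁻¹ * η t j₁ (j₂ - 1))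
    (hqq : ∀ t j₁ j₂, qq t j₁ j₂ = -(θ t j₁ j₂ * (Om t j₁ j₂)⁻¹))
    (hrr : ∀ t j₁ j₂, rr t j₁ j₂ = -((Om t j₁ (j₂ + 1))⁻¹ * η t j₁ j₂)) :
    -- (1)  (φ_{,1} − φ)_t + (φ_{,1} − φ + I)(φ_{,2} − φ)_{,1,-2} − (φ_{,2} − φ)(φ_{,1} − φ + I)
    --        = (q̃_{,2} γ₁ r̃_{,1,-2})_{,-2} − q̃_{,2} γ₁ r̃_{,1,-2}
    --          + (q̃ γ₂ r̃_{,-2})_{,1} − q̃ γ₂ r̃_{,-2}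
    (∀ t j₁ j₂ (a b : Fin m),
      HasDerivAt (fun s => (φ s (j₁ + 1) j₂ - φ s j₁ j₂) a b)
        (((φ t j₁ (j₂ + 1) - φ t j₁ j₂) * (φ t (j₁ + 1) j₂ - φ t j₁ j₂ + 1)
          - (φ t (j₁ + 1) j₂ - φ t j₁ j₂ + 1) * (φ t (j₁ + 1) j₂ - φ t (j₁ + 1) (j₂ - 1))
          + qq t j₁ j₂ * γ₁ t * rr t (j₁ + 1) (j₂ - 2)
          - qq t j₁ (j₂ + 1) * γ₁ t * rr t (j₁ + 1) (j₂ - 1)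
          + qq t (j₁ + 1) j₂ * γ₂ t * rr t (j₁ + 1) (j₂ - 1)
          - qq t j₁ j₂ * γ₂ t * rr t j₁ (j₂ - 1) : Matrix (Fin m) (Fin m) ℂ) a b) t) ∧
    -- (2)  q̃_{,1,2} = −(φ_{,1} − φ + I)_{,2} q̃_{,1} − q̃_{,2} Q − q̃_{,2} γ₁ Ω̃_{,1}⁻¹
    (∀ t j₁ j₂, qq t (j₁ + 1) (j₂ + 1)
      = -((φ t (j₁ + 1) (j₂ + 1) - φ t j₁ (j₂ + 1) + 1) * qq t (j₁ + 1) j₂)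
        - qq t j₁ (j₂ + 1) * Q - qq t j₁ (j₂ + 1) * γ₁ t * (Om t (j₁ + 1) j₂)⁻¹) ∧
    -- (3)  q̃_t = q̃_{,2} + (φ_{,2} − φ) q̃ + q̃ γ₂ Ω̃⁻¹
    (∀ t j₁ j₂ (a : Fin m) (b : Fin n),
      HasDerivAt (fun s => qq s j₁ j₂ a b)
        ((qq t j₁ (j₂ + 1) + (φ t j₁ (j₂ + 1) - φ t j₁ j₂) * qq t j₁ j₂
          + qq t j₁ j₂ * γ₂ t * (Om t j₁ j₂)⁻¹) a b) t) ∧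
    -- (4)  r̃_{,-2} = −r̃ (φ_{,1} − φ + I) − P r̃_{,1,-2} + Ω̃_{,2}⁻¹ γ₁ r̃_{,1,-2}
    (∀ t j₁ j₂, rr t j₁ (j₂ - 1)
      = -(rr t j₁ j₂ * (φ t (j₁ + 1) j₂ - φ t j₁ j₂ + 1)) - P * rr t (j₁ + 1) (j₂ - 1)
        + (Om t j₁ (j₂ + 1))⁻¹ * γ₁ t * rr t (j₁ + 1) (j₂ - 1)) ∧
    -- (5)  r̃_t = −r̃_{,-2} − r̃ (φ_{,2} − φ) + Ω̃_{,2}⁻¹ γ₂ r̃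
    (∀ t j₁ j₂ (a : Fin n) (b : Fin m),
      HasDerivAt (fun s => rr s j₁ j₂ a b)
        ((-rr t j₁ (j₂ - 1) - rr t j₁ j₂ * (φ t j₁ (j₂ + 1) - φ t j₁ j₂)
          + (Om t j₁ (j₂ + 1))⁻¹ * γ₂ t * rr t j₁ j₂) a b) t) := by
  have hdetU : ∀ (s : ℝ) (i j : ℤ), IsUnit (Om s i j).det :=
    fun s i j => (Matrix.isUnit_iff_isUnit_det _).mp (hOminv s i j)
  -- index normalization
  have e1 : ∀ j : ℤ, j - 1 + 1 = j := fun j => by ring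
  have e2 : ∀ j : ℤ, j - 2 + 1 = j - 1 := fun j => by ring
  have e3 : ∀ j : ℤ, j - 1 - 1 = j - 2 := fun j => by ring
  have e4 : ∀ j : ℤ, j + 1 - 1 = j := fun j => by ring
  -- contraction lemmas
  have hGWa : ∀ (s : ℝ) (i j : ℤ) (X : Matrix (Fin n) (Fin m) ℂ),
      (Om s i j)⁻¹ * (Om s i j * X) = X := by
    intro s i j X
    rw [← Matrix.mul_assoc, Matrix.nonsing_inv_mul _ (hdetU s i j), Matrix.one_mul]
  have hGWb : ∀ (s : ℝ) (i j : ℤ) (X : Matrix (Fin n) (Fin n) ℂ),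
      (Om s i j)⁻¹ * (Om s i j * X) = X := by
    intro s i j X
    rw [← Matrix.mul_assoc, Matrix.nonsing_inv_mul _ (hdetU s i j), Matrix.one_mul]
  have hWGa : ∀ (s : ℝ) (i j : ℤ) (X : Matrix (Fin n) (Fin m) ℂ),
      Om s i j * ((Om s i j)⁻¹ * X) = X := by
    intro s i j X
    rw [← Matrix.mul_assoc, Matrix.mul_nonsing_inv _ (hdetU s i j), Matrix.one_mul]
  have hWGb : ∀ (s : ℝ) (i j : ℤ) (X : Matrix (Fin n) (Fin n) ℂ),
      Om s i j * ((Om s i j)⁻¹ * X) = X := by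
    intro s i j X
    rw [← Matrix.mul_assoc, Matrix.mul_nonsing_inv _ (hdetU s i j), Matrix.one_mul]
  have hGW0 : ∀ (s : ℝ) (i j : ℤ), (Om s i j)⁻¹ * Om s i j = 1 :=
    fun s i j => Matrix.nonsing_inv_mul _ (hdetU s i j)
  have hWG0 : ∀ (s : ℝ) (i j : ℤ), Om s i j * (Om s i j)⁻¹ = 1 :=
    fun s i j => Matrix.mul_nonsing_inv _ (hdetU s i j)
  have hETa : ∀ (s : ℝ) (i j : ℤ) (X : Matrix (Fin n) (Fin m) ℂ),
      η s i j * (θ s i j * X) = Om s i (j + 1) * X - Om s i j * X := by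
    intro s i j X
    rw [← Matrix.mul_assoc, ← hOm1 s i j, Matrix.sub_mul]
  have hETb : ∀ (s : ℝ) (i j : ℤ) (X : Matrix (Fin n) (Fin n) ℂ),
      η s i j * (θ s i j * X) = Om s i (j + 1) * X - Om s i j * X := by
    intro s i j X
    rw [← Matrix.mul_assoc, ← hOm1 s i j, Matrix.sub_mul]
  have hET0 : ∀ (s : ℝ) (i j : ℤ), η s i j * θ s i j = Om s i (j + 1) - Om s i j :=
    fun s i j => (hOm1 s i j).symm
  -- derivative of inverse entries
  have hGd : ∀ (t : ℝ) (i j : ℤ) (a b : Fin n),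
      HasDerivAt (fun s => (Om s i j)⁻¹ a b)
        ((-((Om t i j)⁻¹ * Omt t i j * (Om t i j)⁻¹)) a b) t :=
    fun t i j a b => hd_inv (fun a b => hOmt t i j a b) (fun s => hOminv s i j) a b
  -- derivative of entries of u = θ Om⁻¹ η_{-2}
  have hu : ∀ (t : ℝ) (i j : ℤ) (a b : Fin m),
      HasDerivAt (fun s => (θ s i j * (Om s i j)⁻¹ * η s i (j - 1)) a b)
        (((θt t i j * (Om t i j)⁻¹
            + θ t i j * -((Om t i j)⁻¹ * Omt t i j * (Om t i j)⁻¹)) * η t i (j - 1)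
          + θ t i j * (Om t i j)⁻¹ * ηt t i (j - 1)) a b) t :=
    fun t i j a b =>
      hd_entry_mul (hd_entry_mul (fun a b => hθt t i j a b) (fun a b => hGd t i j a b))
        (fun a b => hηt t i (j - 1) a b) a b
  have hφd : ∀ (t : ℝ) (i j : ℤ) (a b : Fin m),
      HasDerivAt (fun s => φ s i j a b)
        ((φ₀t t i j
          + ((θt t i j * (Om t i j)⁻¹
              + θ t i j * -((Om t i j)⁻¹ * Omt t i j * (Om t i j)⁻¹)) * η t i (j - 1)
            + θ t i j * (Om t i j)⁻¹ * ηt t i (j - 1))) a b) t := by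
    intro t i j a b
    have h := (hφ₀t t i j a b).fun_add (hu t i j a b)
    have hfun : (fun s => φ s i j a b)
        = fun s => φ₀ s i j a b + (θ s i j * (Om s i j)⁻¹ * η s i (j - 1)) a b := by
      funext s; rw [hφ, Matrix.add_apply]
    rw [hfun]
    simpa [Matrix.add_apply] using h
  refine ⟨?_, ?_, ?_, ?_, ?_⟩
  · -- (1)
    intro t j₁ j₂ a b
    have hγB : γ₁ t = Om t j₁ (j₂ + 1) * P - Q * Om t (j₁ + 1) j₂
        + η t j₁ j₂ * θ t (j₁ + 1) j₂ := by
      rw [hOm2 t j₁ j₂]; abel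
    have hγA : γ₁ t = Om t j₁ j₂ * P - Q * Om t (j₁ + 1) (j₂ - 1)
        + η t j₁ (j₂ - 1) * θ t (j₁ + 1) (j₂ - 1) := by
      have h := hOm2 t j₁ (j₂ - 1)
      rw [show j₂ - 1 + 1 = j₂ by ring] at h
      rw [h]; abel
    have hg1A : (Om t j₁ j₂)⁻¹ * (γ₁ t * ((Om t (j₁ + 1) (j₂ - 1))⁻¹ * η t (j₁ + 1) (j₂ - 2)))
        = P * ((Om t (j₁ + 1) (j₂ - 1))⁻¹ * η t (j₁ + 1) (j₂ - 2))
          - (Om t j₁ j₂)⁻¹ * (Q * η t (j₁ + 1) (j₂ - 2))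
          + (Om t j₁ j₂)⁻¹ * (η t j₁ (j₂ - 1) * (θ t (j₁ + 1) (j₂ - 1)
            * ((Om t (j₁ + 1) (j₂ - 1))⁻¹ * η t (j₁ + 1) (j₂ - 2)))) := by
      rw [hγA]
      simp only [Matrix.sub_mul, Matrix.add_mul, Matrix.mul_sub, Matrix.mul_add,
        Matrix.mul_assoc, hGWa, hGWb, hWGa, hWGb]
      try abel
    have hg1B : (Om t j₁ (j₂ + 1))⁻¹ * (γ₁ t * ((Om t (j₁ + 1) j₂)⁻¹ * η t (j₁ + 1) (j₂ - 1)))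
        = P * ((Om t (j₁ + 1) j₂)⁻¹ * η t (j₁ + 1) (j₂ - 1))
          - (Om t j₁ (j₂ + 1))⁻¹ * (Q * η t (j₁ + 1) (j₂ - 1))
          + (Om t j₁ (j₂ + 1))⁻¹ * (η t j₁ j₂ * (θ t (j₁ + 1) j₂
            * ((Om t (j₁ + 1) j₂)⁻¹ * η t (j₁ + 1) (j₂ - 1)))) := by
      rw [hγB]
      simp only [Matrix.sub_mul, Matrix.add_mul, Matrix.mul_sub, Matrix.mul_add,
        Matrix.mul_assoc, hGWa, hGWb, hWGa, hWGb]
      try abel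
    have hT12 : θ t (j₁ + 1) (j₂ + 1)
        = -θ t (j₁ + 1) j₂ - (φ₀ t (j₁ + 1) (j₂ + 1) - φ₀ t j₁ (j₂ + 1)) * θ t (j₁ + 1) j₂
          - θ t j₁ (j₂ + 1) * P := eq_sub_of_add_eq (hθ1 t j₁ j₂)
    have hT10 : θ t (j₁ + 1) j₂
        = -θ t (j₁ + 1) (j₂ - 1) - (φ₀ t (j₁ + 1) j₂ - φ₀ t j₁ j₂) * θ t (j₁ + 1) (j₂ - 1)
          - θ t j₁ j₂ * P := by
      have h := hθ1 t j₁ (j₂ - 1)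
      rw [show j₂ - 1 + 1 = j₂ by ring] at h
      exact eq_sub_of_add_eq h
    have hEm1 : η t j₁ (j₂ - 1)
        = -η t j₁ j₂ - η t j₁ j₂ * (φ₀ t (j₁ + 1) j₂ - φ₀ t j₁ j₂)
          - Q * η t (j₁ + 1) (j₂ - 1) := eq_sub_of_add_eq (hη1 t j₁ j₂)
    have hEm2 : η t j₁ (j₂ - 2)
        = -η t j₁ (j₂ - 1) - η t j₁ (j₂ - 1) * (φ₀ t (j₁ + 1) (j₂ - 1) - φ₀ t j₁ (j₂ - 1))
          - Q * η t (j₁ + 1) (j₂ - 2) := by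
      have h := hη1 t j₁ (j₂ - 1)
      rw [show j₂ - 1 - 1 = j₂ - 2 by ring] at h
      exact eq_sub_of_add_eq h
    have hs : φ₀t t (j₁ + 1) j₂ = ((φ₀ t j₁ (j₂ + 1) - φ₀ t j₁ j₂)
          * (φ₀ t (j₁ + 1) j₂ - φ₀ t j₁ j₂ + 1)
        - (φ₀ t (j₁ + 1) j₂ - φ₀ t j₁ j₂ + 1)
          * (φ₀ t (j₁ + 1) j₂ - φ₀ t (j₁ + 1) (j₂ - 1))) + φ₀t t j₁ j₂ :=
      eq_add_of_sub_eq (hseed t j₁ j₂)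
    have hkey : (φ₀t t (j₁ + 1) j₂
          + ((θt t (j₁ + 1) j₂ * (Om t (j₁ + 1) j₂)⁻¹
              + θ t (j₁ + 1) j₂ * -((Om t (j₁ + 1) j₂)⁻¹ * Omt t (j₁ + 1) j₂ * (Om t (j₁ + 1) j₂)⁻¹))
                * η t (j₁ + 1) (j₂ - 1)
            + θ t (j₁ + 1) j₂ * (Om t (j₁ + 1) j₂)⁻¹ * ηt t (j₁ + 1) (j₂ - 1)))
        - (φ₀t t j₁ j₂
          + ((θt t j₁ j₂ * (Om t j₁ j₂)⁻¹
              + θ t j₁ j₂ * -((Om t j₁ j₂)⁻¹ * Omt t j₁ j₂ * (Om t j₁ j₂)⁻¹))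
                * η t j₁ (j₂ - 1)
            + θ t j₁ j₂ * (Om t j₁ j₂)⁻¹ * ηt t j₁ (j₂ - 1)))
        = ((φ t j₁ (j₂ + 1) - φ t j₁ j₂) * (φ t (j₁ + 1) j₂ - φ t j₁ j₂ + 1)
          - (φ t (j₁ + 1) j₂ - φ t j₁ j₂ + 1) * (φ t (j₁ + 1) j₂ - φ t (j₁ + 1) (j₂ - 1))
          + qq t j₁ j₂ * γ₁ t * rr t (j₁ + 1) (j₂ - 2)
          - qq t j₁ (j₂ + 1) * γ₁ t * rr t (j₁ + 1) (j₂ - 1)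
          + qq t (j₁ + 1) j₂ * γ₂ t * rr t (j₁ + 1) (j₂ - 1)
          - qq t j₁ j₂ * γ₂ t * rr t j₁ (j₂ - 1) : Matrix (Fin m) (Fin m) ℂ) := by
      simp only [hφ, hqq, hrr, hθ2, hη2, hOm3, hs, e1, e2, e3, e4,
        hT12, hT10, hEm1, hEm2, hg1A, hg1B,
        hETa, hETb, hET0, hGWa, hGWb, hGW0, hWGa, hWGb, hWG0,
        Matrix.mul_assoc, Matrix.mul_add, Matrix.add_mul, Matrix.mul_sub, Matrix.sub_mul,
        Matrix.neg_mul, Matrix.mul_neg, Matrix.mul_one, Matrix.one_mul, neg_neg]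
      abel
    have h := (hφd t (j₁ + 1) j₂ a b).sub (hφd t j₁ j₂ a b)
    have hfun : (fun s => (φ s (j₁ + 1) j₂ - φ s j₁ j₂) a b)
        = fun s => φ s (j₁ + 1) j₂ a b - φ s j₁ j₂ a b := by
      funext s; rw [Matrix.sub_apply]
    have hv : (φ₀t t (j₁ + 1) j₂
          + ((θt t (j₁ + 1) j₂ * (Om t (j₁ + 1) j₂)⁻¹
              + θ t (j₁ + 1) j₂ * -((Om t (j₁ + 1) j₂)⁻¹ * Omt t (j₁ + 1) j₂ * (Om t (j₁ + 1) j₂)⁻¹))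
                * η t (j₁ + 1) (j₂ - 1)
            + θ t (j₁ + 1) j₂ * (Om t (j₁ + 1) j₂)⁻¹ * ηt t (j₁ + 1) (j₂ - 1))) a b
        - (φ₀t t j₁ j₂
          + ((θt t j₁ j₂ * (Om t j₁ j₂)⁻¹
              + θ t j₁ j₂ * -((Om t j₁ j₂)⁻¹ * Omt t j₁ j₂ * (Om t j₁ j₂)⁻¹))
                * η t j₁ (j₂ - 1)
            + θ t j₁ j₂ * (Om t j₁ j₂)⁻¹ * ηt t j₁ (j₂ - 1))) a b
        = ((φ t j₁ (j₂ + 1) - φ t j₁ j₂) * (φ t (j₁ + 1) j₂ - φ t j₁ j₂ + 1)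
          - (φ t (j₁ + 1) j₂ - φ t j₁ j₂ + 1) * (φ t (j₁ + 1) j₂ - φ t (j₁ + 1) (j₂ - 1))
          + qq t j₁ j₂ * γ₁ t * rr t (j₁ + 1) (j₂ - 2)
          - qq t j₁ (j₂ + 1) * γ₁ t * rr t (j₁ + 1) (j₂ - 1)
          + qq t (j₁ + 1) j₂ * γ₂ t * rr t (j₁ + 1) (j₂ - 1)
          - qq t j₁ j₂ * γ₂ t * rr t j₁ (j₂ - 1) : Matrix (Fin m) (Fin m) ℂ) a b := by
      rw [← Matrix.sub_apply, hkey]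
    rw [hfun, ← hv]
    exact h
  · -- (2)
    intro t j₁ j₂
    have hγB : γ₁ t = Om t j₁ (j₂ + 1) * P - Q * Om t (j₁ + 1) j₂
        + η t j₁ j₂ * θ t (j₁ + 1) j₂ := by
      rw [hOm2 t j₁ j₂]; abel
    have hg1C : (Om t j₁ (j₂ + 1))⁻¹ * (γ₁ t * (Om t (j₁ + 1) j₂)⁻¹)
        = P * (Om t (j₁ + 1) j₂)⁻¹ - (Om t j₁ (j₂ + 1))⁻¹ * Q
          + (Om t j₁ (j₂ + 1))⁻¹ * (η t j₁ j₂ * (θ t (j₁ + 1) j₂ * (Om t (j₁ + 1) j₂)⁻¹)) := by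
      rw [hγB]
      simp only [Matrix.sub_mul, Matrix.add_mul, Matrix.mul_sub, Matrix.mul_add,
        Matrix.mul_assoc, hGWa, hGWb, hWGa, hWGb, hGW0, hWG0, Matrix.mul_one, Matrix.one_mul]
      try abel
    have hT12 : θ t (j₁ + 1) (j₂ + 1)
        = -θ t (j₁ + 1) j₂ - (φ₀ t (j₁ + 1) (j₂ + 1) - φ₀ t j₁ (j₂ + 1)) * θ t (j₁ + 1) j₂
          - θ t j₁ (j₂ + 1) * P := eq_sub_of_add_eq (hθ1 t j₁ j₂)
    simp only [hφ, hqq, e1, e2, e3, e4, hT12, hg1C,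
      hETa, hETb, hET0, hGWa, hGWb, hGW0, hWGa, hWGb, hWG0,
      Matrix.mul_assoc, Matrix.mul_add, Matrix.add_mul, Matrix.mul_sub, Matrix.sub_mul,
        Matrix.neg_mul, Matrix.mul_neg, Matrix.mul_one, Matrix.one_mul, neg_neg]
    abel
  · -- (3)
    intro t j₁ j₂ a b
    have h := (hd_entry_mul (fun a b => hθt t j₁ j₂ a b) (fun a b => hGd t j₁ j₂ a b) a b).neg
    have hfun : (fun s => qq s j₁ j₂ a b)
        = fun s => -((θ s j₁ j₂ * (Om s j₁ j₂)⁻¹) a b) := by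
      funext s; rw [hqq, Matrix.neg_apply]
    have hkey : -(θt t j₁ j₂ * (Om t j₁ j₂)⁻¹
          + θ t j₁ j₂ * -((Om t j₁ j₂)⁻¹ * Omt t j₁ j₂ * (Om t j₁ j₂)⁻¹))
        = qq t j₁ (j₂ + 1) + (φ t j₁ (j₂ + 1) - φ t j₁ j₂) * qq t j₁ j₂
          + qq t j₁ j₂ * γ₂ t * (Om t j₁ j₂)⁻¹ := by
      simp only [hφ, hqq, hθ2, hOm3, e1, e2, e3, e4,
        hETa, hETb, hET0, hGWa, hGWb, hGW0, hWGa, hWGb, hWG0,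
        Matrix.mul_assoc, Matrix.mul_add, Matrix.add_mul, Matrix.mul_sub, Matrix.sub_mul,
        Matrix.neg_mul, Matrix.mul_neg, Matrix.mul_one, Matrix.one_mul, neg_neg]
      abel
    have hv : (qq t j₁ (j₂ + 1) + (φ t j₁ (j₂ + 1) - φ t j₁ j₂) * qq t j₁ j₂
          + qq t j₁ j₂ * γ₂ t * (Om t j₁ j₂)⁻¹) a b
        = -((θt t j₁ j₂ * (Om t j₁ j₂)⁻¹
          + θ t j₁ j₂ * -((Om t j₁ j₂)⁻¹ * Omt t j₁ j₂ * (Om t j₁ j₂)⁻¹)) a b) := by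
      rw [← Matrix.neg_apply, ← hkey]
    rw [hfun, hv]
    exact h
  · -- (4)
    intro t j₁ j₂
    have hγB : γ₁ t = Om t j₁ (j₂ + 1) * P - Q * Om t (j₁ + 1) j₂
        + η t j₁ j₂ * θ t (j₁ + 1) j₂ := by
      rw [hOm2 t j₁ j₂]; abel
    have hg1B : (Om t j₁ (j₂ + 1))⁻¹ * (γ₁ t * ((Om t (j₁ + 1) j₂)⁻¹ * η t (j₁ + 1) (j₂ - 1)))
        = P * ((Om t (j₁ + 1) j₂)⁻¹ * η t (j₁ + 1) (j₂ - 1))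
          - (Om t j₁ (j₂ + 1))⁻¹ * (Q * η t (j₁ + 1) (j₂ - 1))
          + (Om t j₁ (j₂ + 1))⁻¹ * (η t j₁ j₂ * (θ t (j₁ + 1) j₂
            * ((Om t (j₁ + 1) j₂)⁻¹ * η t (j₁ + 1) (j₂ - 1)))) := by
      rw [hγB]
      simp only [Matrix.sub_mul, Matrix.add_mul, Matrix.mul_sub, Matrix.mul_add,
        Matrix.mul_assoc, hGWa, hGWb, hWGa, hWGb]
      try abel
    have hEm1 : η t j₁ (j₂ - 1)
        = -η t j₁ j₂ - η t j₁ j₂ * (φ₀ t (j₁ + 1) j₂ - φ₀ t j₁ j₂)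
          - Q * η t (j₁ + 1) (j₂ - 1) := eq_sub_of_add_eq (hη1 t j₁ j₂)
    simp only [hφ, hrr, e1, e2, e3, e4, hEm1, hg1B,
      hETa, hETb, hET0, hGWa, hGWb, hGW0, hWGa, hWGb, hWG0,
      Matrix.mul_assoc, Matrix.mul_add, Matrix.add_mul, Matrix.mul_sub, Matrix.sub_mul,
        Matrix.neg_mul, Matrix.mul_neg, Matrix.mul_one, Matrix.one_mul, neg_neg]
    abel
  · -- (5)
    intro t j₁ j₂ a b
    have h := (hd_entry_mul (fun a b => hGd t j₁ (j₂ + 1) a b) (fun a b => hηt t j₁ j₂ a b) a b).neg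
    have hfun : (fun s => rr s j₁ j₂ a b)
        = fun s => -(((Om s j₁ (j₂ + 1))⁻¹ * η s j₁ j₂) a b) := by
      funext s; rw [hrr, Matrix.neg_apply]
    have hkey : -(-((Om t j₁ (j₂ + 1))⁻¹ * Omt t j₁ (j₂ + 1) * (Om t j₁ (j₂ + 1))⁻¹) * η t j₁ j₂
          + (Om t j₁ (j₂ + 1))⁻¹ * ηt t j₁ j₂)
        = -rr t j₁ (j₂ - 1) - rr t j₁ j₂ * (φ t j₁ (j₂ + 1) - φ t j₁ j₂)
          + (Om t j₁ (j₂ + 1))⁻¹ * γ₂ t * rr t j₁ j₂ := by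
      simp only [hφ, hrr, hη2, hOm3, e1, e2, e3, e4,
        hETa, hETb, hET0, hGWa, hGWb, hGW0, hWGa, hWGb, hWG0,
        Matrix.mul_assoc, Matrix.mul_add, Matrix.add_mul, Matrix.mul_sub, Matrix.sub_mul,
        Matrix.neg_mul, Matrix.mul_neg, Matrix.mul_one, Matrix.one_mul, neg_neg]
      abel
    have hv : (-rr t j₁ (j₂ - 1) - rr t j₁ j₂ * (φ t j₁ (j₂ + 1) - φ t j₁ j₂)
          + (Om t j₁ (j₂ + 1))⁻¹ * γ₂ t * rr t j₁ j₂) a b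
        = -((-((Om t j₁ (j₂ + 1))⁻¹ * Omt t j₁ (j₂ + 1) * (Om t j₁ (j₂ + 1))⁻¹) * η t j₁ j₂
          + (Om t j₁ (j₂ + 1))⁻¹ * ηt t j₁ j₂) a b) := by
      rw [← hkey, Matrix.neg_apply]
    rw [hfun, hv]
    exact h
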